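/- arXiv:2404.18101 — 9 statements merged into one kernel-verified Lean document; each statement's English description precedes it below -/
import Mathlib

section
/- Fix λ > 0 and u ∈ ℝ. As the shape parameter a tends to +∞, the wave loss L_{a,λ}(u) converges to the '0–1/λ' loss: the limit of L_{a,λ}(u) as a → +∞ equals 1/λ if u > 0, and equals 0 if u ≤ 0. (In particular, for λ = 1 the pointwise limit is the 0–1 loss.) -/
noncomputable def waveLoss (a lam u : ℝ) : ℝ :=
  (1 / lam) * (1 - 1 / (1 + lam * u ^ 2 * Real.exp (a * u)))

theorem wave_loss_tendsto_zero_one_loss (lam : ℝ) (hlam : 0 < lam) (u : ℝ) :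
    Filter.Tendsto (fun a : ℝ => waveLoss a lam u) Filter.atTop
      (nhds (if 0 < u then 1 / lam else 0)) := by
  unfold waveLoss
  rcases lt_trichotomy u 0 with hu | hu | hu
  · rw [if_neg (not_lt.mpr hu.le)]
    have h1 : Filter.Tendsto (fun a : ℝ => lam * u ^ 2 * Real.exp (a * u))
        Filter.atTop (nhds 0) := by
      have : Filter.Tendsto (fun a : ℝ => Real.exp (a * u)) Filter.atTop (nhds 0) := by
        apply Real.tendsto_exp_atBot.comp
        exact Filter.Tendsto.atTop_mul_const_of_neg hu Filter.tendsto_id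
      simpa using this.const_mul (lam * u ^ 2)
    have h2 : Filter.Tendsto (fun a : ℝ => (1 / lam) * (1 - 1 / (1 + lam * u ^ 2 * Real.exp (a * u))))
        Filter.atTop (nhds ((1 / lam) * (1 - 1 / (1 + 0)))) := by
      apply Filter.Tendsto.const_mul
      apply Filter.Tendsto.const_sub
      simpa [one_div] using (h1.const_add 1).inv₀ (by norm_num)
    simpa using h2
  · subst hu
    rw [if_neg (lt_irrefl 0)]
    simpa using tendsto_const_nhds (α := ℝ) (f := Filter.atTop)
      (a := (1 / lam) * (1 - 1 / (1 + lam * 0 ^ 2)))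
  · rw [if_pos hu]
    have h1 : Filter.Tendsto (fun a : ℝ => 1 + lam * u ^ 2 * Real.exp (a * u))
        Filter.atTop Filter.atTop := by
      apply Filter.tendsto_atTop_add_const_left
      apply Filter.Tendsto.const_mul_atTop (by positivity)
      exact Real.tendsto_exp_atTop.comp (Filter.Tendsto.atTop_mul_const hu Filter.tendsto_id)
    have h2 : Filter.Tendsto (fun a : ℝ => (1 / lam) * (1 - 1 / (1 + lam * u ^ 2 * Real.exp (a * u))))
        Filter.atTop (nhds ((1 / lam) * (1 - 0))) := by
      apply Filter.Tendsto.const_mul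
      apply Filter.Tendsto.const_sub
      simpa [Pi.inv_def] using h1.inv_tendsto_atTop
    simpa using h2
end

section
/- For every shape parameter a > 0 and bounding parameter λ > 0, the wave loss satisfies lim_{u→+∞} L_{a,λ}(u) = 1/λ and lim_{u→−∞} L_{a,λ}(u) = 0; consequently the supremum of L_{a,λ} over ℝ equals 1/λ, and this supremum is not attained at any u ∈ ℝ. -/
open Filter Real Topology

lemma waveLoss_g_pos (a lam : ℝ) (hlam : 0 < lam) (u : ℝ) :
    0 < 1 + lam * u ^ 2 * Real.exp (a * u) := by
  have : 0 ≤ lam * u ^ 2 * Real.exp (a * u) :=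
    mul_nonneg (mul_nonneg hlam.le (sq_nonneg u)) (Real.exp_pos _).le
  linarith

lemma waveLoss_lt (a lam : ℝ) (hlam : 0 < lam) (u : ℝ) :
    waveLoss a lam u < 1 / lam := by
  have h := waveLoss_g_pos a lam hlam u
  have h1 : 0 < 1 / (1 + lam * u ^ 2 * Real.exp (a * u)) := by positivity
  unfold waveLoss
  have : (1 : ℝ) - 1 / (1 + lam * u ^ 2 * Real.exp (a * u)) < 1 := by linarith
  calc (1 / lam) * (1 - 1 / (1 + lam * u ^ 2 * Real.exp (a * u)))
      < (1 / lam) * 1 := by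
        apply mul_lt_mul_of_pos_left this (by positivity)
    _ = 1 / lam := mul_one _

lemma waveLoss_tendsto_atTop (a lam : ℝ) (ha : 0 < a) (hlam : 0 < lam) :
    Tendsto (waveLoss a lam) atTop (𝓝 (1 / lam)) := by
  have hg : Tendsto (fun u => 1 + lam * u ^ 2 * Real.exp (a * u)) atTop atTop := by
    apply tendsto_atTop_add_const_left
    have h1 : Tendsto (fun u : ℝ => u ^ 2) atTop atTop := tendsto_pow_atTop (by norm_num)
    have h2 : Tendsto (fun u : ℝ => Real.exp (a * u)) atTop atTop :=
      Real.tendsto_exp_atTop.comp (tendsto_const_mul_atTop_of_pos ha |>.mpr tendsto_id)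
    have := (h1.atTop_mul_atTop₀ h2).const_mul_atTop hlam
    simpa [mul_assoc] using this
  have hinv : Tendsto (fun u => 1 / (1 + lam * u ^ 2 * Real.exp (a * u))) atTop (𝓝 0) := by
    simpa [one_div, Pi.inv_def] using hg.inv_tendsto_atTop
  have : Tendsto (fun u => (1 / lam) * (1 - 1 / (1 + lam * u ^ 2 * Real.exp (a * u))))
      atTop (𝓝 ((1 / lam) * (1 - 0))) :=
    (tendsto_const_nhds.sub hinv).const_mul _
  have heq : waveLoss a lam = fun u => (1 / lam) * (1 - 1 / (1 + lam * u ^ 2 * Real.exp (a * u))) := rfl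
  rw [heq]
  simpa using this

lemma waveLoss_tendsto_atBot (a lam : ℝ) (ha : 0 < a) (hlam : 0 < lam) :
    Tendsto (waveLoss a lam) atBot (𝓝 0) := by
  have key : Tendsto (fun u : ℝ => u ^ 2 * Real.exp (a * u)) atBot (𝓝 0) := by
    have h : Tendsto (fun x : ℝ => (x / a) ^ 2 * Real.exp (-x)) atTop (𝓝 0) := by
      have := Real.tendsto_pow_mul_exp_neg_atTop_nhds_zero 2
      have h2 : Tendsto (fun x : ℝ => (1 / a ^ 2) * (x ^ 2 * Real.exp (-x))) atTop
          (𝓝 ((1 / a ^ 2) * 0)) := this.const_mul _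
      simp only [mul_zero] at h2
      refine h2.congr fun x => ?_
      field_simp
    have hcomp : Tendsto (fun u : ℝ => -(a * u)) atBot atTop := by
      apply tendsto_neg_atBot_atTop.comp
      exact (tendsto_const_mul_atBot_of_pos ha).mpr tendsto_id
    have := h.comp hcomp
    refine this.congr fun u => ?_
    simp only [Function.comp]
    rw [neg_neg]
    congr 1
    field_simp
  have hg : Tendsto (fun u => 1 + lam * u ^ 2 * Real.exp (a * u)) atBot (𝓝 1) := by
    have : Tendsto (fun u : ℝ => lam * (u ^ 2 * Real.exp (a * u))) atBot (𝓝 (lam * 0)) :=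
      key.const_mul _
    simp only [mul_zero] at this
    have h2 := tendsto_const_nhds (x := (1:ℝ)) (f := atBot).add this
    simpa [mul_assoc] using h2
  have hinv : Tendsto (fun u => 1 / (1 + lam * u ^ 2 * Real.exp (a * u))) atBot (𝓝 1) := by
    have := hg.inv₀ (by norm_num)
    simpa [one_div] using this
  have : Tendsto (fun u => (1 / lam) * (1 - 1 / (1 + lam * u ^ 2 * Real.exp (a * u))))
      atBot (𝓝 ((1 / lam) * (1 - 1))) :=
    (tendsto_const_nhds.sub hinv).const_mul _
  have heq : waveLoss a lam = fun u => (1 / lam) * (1 - 1 / (1 + lam * u ^ 2 * Real.exp (a * u))) := rfl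
  rw [heq]
  simpa using this

theorem wave_loss_limits_and_sup (a lam : ℝ) (ha : 0 < a) (hlam : 0 < lam) :
    Filter.Tendsto (waveLoss a lam) Filter.atTop (nhds (1 / lam)) ∧
    Filter.Tendsto (waveLoss a lam) Filter.atBot (nhds 0) ∧
    (⨆ u : ℝ, waveLoss a lam u) = 1 / lam ∧
    ∀ u : ℝ, waveLoss a lam u ≠ 1 / lam := by
  have hTop := waveLoss_tendsto_atTop a lam ha hlam
  have hBot := waveLoss_tendsto_atBot a lam ha hlam
  have hlt := waveLoss_lt a lam hlam
  have hbdd : BddAbove (Set.range (waveLoss a lam)) :=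
    ⟨1 / lam, by rintro _ ⟨u, rfl⟩; exact (hlt u).le⟩
  refine ⟨hTop, hBot, ?_, fun u => (hlt u).ne⟩
  apply le_antisymm
  · exact ciSup_le fun u => (hlt u).le
  · exact le_of_tendsto hTop (Filter.Eventually.of_forall fun u => le_ciSup hbdd u)
end

section
/- For every shape parameter a ∈ ℝ and bounding parameter λ > 0, the wave loss function L_{a,λ} is not convex on ℝ (i.e., it is not a convex function on the whole real line). -/
theorem wave_loss_not_convex (a lam : ℝ) (hlam : 0 < lam) :
    ¬ ConvexOn ℝ Set.univ (waveLoss a lam) := by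
  intro h
  set c := waveLoss a lam 1 with hc
  have hE : 0 < Real.exp (a * 1) := Real.exp_pos _
  have hd1 : (1:ℝ) < 1 + lam * 1 ^ 2 * Real.exp (a * 1) := by nlinarith
  have hcpos : 0 < c := by
    rw [hc, waveLoss]
    have hx : 1 / (1 + lam * 1 ^ 2 * Real.exp (a * 1)) < 1 := by
      rw [div_lt_one (by linarith)]; linarith
    have h1 : 0 < 1 / lam := by positivity
    nlinarith
  set T : ℝ := 1 / (lam * c) + 1 with hT
  have hpos : 0 < 1 / (lam * c) := by positivity
  have hT1 : 1 < T := by rw [hT]; linarith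
  have hT0 : 0 < T := by linarith
  have hfT : waveLoss a lam T ≤ 1 / lam := by
    rw [waveLoss]
    have hET : 0 < Real.exp (a * T) := Real.exp_pos _
    have hD0 : 0 ≤ lam * T ^ 2 * Real.exp (a * T) :=
      mul_nonneg (mul_nonneg hlam.le (sq_nonneg T)) hET.le
    have hx : 0 < 1 / (1 + lam * T ^ 2 * Real.exp (a * T)) := by positivity
    have h1 : 0 < 1 / lam := by positivity
    nlinarith
  have hf0 : waveLoss a lam 0 = 0 := by simp [waveLoss]
  have hw1 : (0:ℝ) ≤ 1 - 1/T := by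
    rw [sub_nonneg, div_le_one hT0]; linarith
  have hw2 : (0:ℝ) ≤ 1/T := by positivity
  have hw3 : (1 - 1/T) + 1/T = 1 := by ring
  have hconv := h.2 (Set.mem_univ (0:ℝ)) (Set.mem_univ T) hw1 hw2 hw3
  rw [smul_eq_mul, smul_eq_mul, smul_eq_mul, smul_eq_mul, mul_zero, zero_add,
    one_div, inv_mul_cancel₀ (ne_of_gt hT0), hf0, mul_zero, zero_add] at hconv
  have hle : c ≤ 1 / (T * lam) := by
    rw [one_div, mul_inv]
    refine le_trans hconv ?_
    have hTinv : 0 < T⁻¹ := by positivity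
    calc T⁻¹ * waveLoss a lam T ≤ T⁻¹ * (1/lam) := by
          exact mul_le_mul_of_nonneg_left hfT hTinv.le
      _ = T⁻¹ * lam⁻¹ := by rw [one_div]
  have hle' : c * (T * lam) ≤ 1 := (le_div_iff₀ (by positivity)).mp hle
  have heq : c * (T * lam) = 1 + c * lam := by
    rw [hT]; field_simp
  nlinarith
end

section
/- For every shape parameter a > 0 and bounding parameter λ > 0, the wave loss L_{a,λ} is strictly increasing on (−∞, −2/a] and strictly decreasing on [−2/a, 0]; consequently, on the half-line (−∞, 0] the wave loss attains its maximum value uniquely at the point u = −2/a, where L_{a,λ}(−2/a) = (1/λ)·(1 − 1/(1 + λ·(4/a²)·e^{−2})). -/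
theorem wave_loss_negative_halfline (a lam : ℝ) (ha : 0 < a) (hlam : 0 < lam) :
    StrictMonoOn (waveLoss a lam) (Set.Iic (-2 / a)) ∧
    StrictAntiOn (waveLoss a lam) (Set.Icc (-2 / a) 0) ∧
    (∀ u : ℝ, u ≤ 0 → u ≠ -2 / a → waveLoss a lam u < waveLoss a lam (-2 / a)) ∧
    waveLoss a lam (-2 / a) =
      (1 / lam) * (1 - 1 / (1 + lam * (4 / a ^ 2) * Real.exp (-2))) := by
  have ha' : a ≠ 0 := ha.ne'
  set g : ℝ → ℝ := fun u => u ^ 2 * Real.exp (a * u) with hg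
  have hgd : ∀ u : ℝ, HasDerivAt g (u * (a * u + 2) * Real.exp (a * u)) u := by
    intro u
    have h1 : HasDerivAt (fun u : ℝ => u ^ 2) (2 * u) u := by
      simpa using hasDerivAt_pow 2 u
    have h2 : HasDerivAt (fun u : ℝ => Real.exp (a * u)) (Real.exp (a * u) * a) u := by
      have := (Real.hasDerivAt_exp (a * u)).comp u ((hasDerivAt_id u).const_mul a)
      simpa [mul_comm, Function.comp_def] using this
    have := h1.mul h2
    exact this.congr_deriv (by ring)
  have hgc : Continuous g := by
    exact (continuous_pow 2).mul ((Real.continuous_exp).comp (continuous_const.mul continuous_id))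
  have hgderiv : ∀ u, deriv g u = u * (a * u + 2) * Real.exp (a * u) := fun u => (hgd u).deriv
  have hc : -2 / a < 0 := div_neg_of_neg_of_pos (by norm_num) ha
  have gmono : StrictMonoOn g (Set.Iic (-2 / a)) := by
    apply strictMonoOn_of_deriv_pos (convex_Iic _) hgc.continuousOn
    intro u hu
    rw [interior_Iic] at hu
    rw [hgderiv]
    have hu0 : u < 0 := hu.trans hc
    have h2 : a * u + 2 < 0 := by
      have := (lt_div_iff₀ ha).mp hu
      nlinarith
    exact mul_pos (mul_pos_of_neg_of_neg hu0 h2) (Real.exp_pos _)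
  have ganti : StrictAntiOn g (Set.Icc (-2 / a) 0) := by
    apply strictAntiOn_of_deriv_neg (convex_Icc _ _) hgc.continuousOn
    intro u hu
    rw [interior_Icc] at hu
    rw [hgderiv]
    have hu0 : u < 0 := hu.2
    have h2 : 0 < a * u + 2 := by
      have := (div_lt_iff₀ ha).mp hu.1
      nlinarith
    exact mul_neg_of_neg_of_pos (mul_neg_of_neg_of_pos hu0 h2) (Real.exp_pos _)
  have hkey : ∀ u v : ℝ, g u < g v → waveLoss a lam u < waveLoss a lam v := by
    intro u v huv
    have hgu : (0:ℝ) ≤ u ^ 2 * Real.exp (a * u) := by positivity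
    have h1 : 0 < 1 + lam * u ^ 2 * Real.exp (a * u) := by nlinarith
    have h3 : 1 + lam * u ^ 2 * Real.exp (a * u) < 1 + lam * v ^ 2 * Real.exp (a * v) := by
      have := mul_lt_mul_of_pos_left huv hlam
      simp only [hg] at this
      nlinarith
    unfold waveLoss
    apply mul_lt_mul_of_pos_left _ (by positivity : (0:ℝ) < 1 / lam)
    linarith [one_div_lt_one_div_of_lt h1 h3]
  refine ⟨fun x hx y hy hxy => hkey x y (gmono hx hy hxy),
    fun x hx y hy hxy => hkey y x (ganti hx hy hxy), ?_, ?_⟩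
  · intro u hu hne
    rcases lt_or_gt_of_ne hne with h | h
    · exact hkey u (-2/a) (gmono h.le (Set.mem_Iic.mpr le_rfl) h)
    · exact hkey u (-2/a) (ganti ⟨le_rfl, hc.le⟩ ⟨h.le, hu⟩ h)
  · have h1 : a * (-2 / a) = -2 := by field_simp
    have h2 : ((-2 : ℝ) / a) ^ 2 = 4 / a ^ 2 := by rw [div_pow]; norm_num
    unfold waveLoss
    rw [h1, h2]
end

section
/- For every shape parameter a > 0 and bounding parameter λ > 0, the derivative of the wave loss, L_{a,λ}'(u) = u·(a·u + 2)·e^{a·u} / (1 + λ·u²·e^{a·u})², tends to 0 as u → +∞ and also tends to 0 as u → −∞; moreover L_{a,λ}' is a bounded function on ℝ. -/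
noncomputable def waveLossDeriv (a lam u : ℝ) : ℝ :=
  u * (a * u + 2) * Real.exp (a * u) / (1 + lam * u ^ 2 * Real.exp (a * u)) ^ 2

open Filter Real

/-- Polynomial times decaying exponential tends to 0 at `atBot`. -/
lemma pow_mul_exp_tendsto_atBot (a : ℝ) (ha : 0 < a) (n : ℕ) :
    Tendsto (fun u : ℝ => u ^ n * Real.exp (a * u)) atBot (nhds 0) := by
  have h1 := Real.tendsto_pow_mul_exp_neg_atTop_nhds_zero n
  have h2 : Tendsto (fun u : ℝ => -(a * u)) atBot atTop := by
    have : Tendsto (fun u : ℝ => a * u) atBot atBot :=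
      (tendsto_const_mul_atBot_of_pos ha).2 tendsto_id
    exact tendsto_neg_atBot_atTop.comp this
  have h3 := (h1.comp h2).const_mul ((-1 / a) ^ n)
  rw [mul_zero] at h3
  refine h3.congr fun u => ?_
  simp only [Function.comp_apply, neg_neg]
  rw [← mul_assoc, ← mul_pow]
  congr 2
  field_simp

theorem wave_loss_deriv_vanishes_and_bounded (a lam : ℝ) (ha : 0 < a) (hlam : 0 < lam) :
    Filter.Tendsto (waveLossDeriv a lam) Filter.atTop (nhds 0) ∧
    Filter.Tendsto (waveLossDeriv a lam) Filter.atBot (nhds 0) ∧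
    ∃ M : ℝ, ∀ u : ℝ, |waveLossDeriv a lam u| ≤ M := by
  have hden : ∀ u : ℝ, (0:ℝ) < 1 + lam * u ^ 2 * Real.exp (a * u) := by
    intro u
    have : 0 ≤ lam * u ^ 2 * Real.exp (a * u) :=
      mul_nonneg (mul_nonneg hlam.le (sq_nonneg u)) (Real.exp_pos _).le
    linarith
  -- Limit at +∞
  have htop : Tendsto (waveLossDeriv a lam) atTop (nhds 0) := by
    set h : ℝ → ℝ := fun u => (a / u ^ 2 + 2 / u ^ 3) * Real.exp (-(a * u)) / lam ^ 2 with hh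
    have hhlim : Tendsto h atTop (nhds 0) := by
      have h1 : Tendsto (fun u : ℝ => a / u ^ 2 + 2 / u ^ 3) atTop (nhds 0) := by
        have t2 : Tendsto (fun u : ℝ => a / u ^ 2) atTop (nhds 0) :=
          Tendsto.div_atTop tendsto_const_nhds (tendsto_pow_atTop (by norm_num))
        have t3 : Tendsto (fun u : ℝ => 2 / u ^ 3) atTop (nhds 0) :=
          Tendsto.div_atTop tendsto_const_nhds (tendsto_pow_atTop (by norm_num))
        simpa using t2.add t3
      have h2 : Tendsto (fun u : ℝ => Real.exp (-(a * u))) atTop (nhds 0) := by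
        apply Real.tendsto_exp_atBot.comp
        have : Tendsto (fun u : ℝ => a * u) atTop atTop :=
          (tendsto_const_mul_atTop_of_pos ha).2 tendsto_id
        exact tendsto_neg_atTop_atBot.comp this
      have := (h1.mul h2).div_const (lam ^ 2)
      simpa using this
    have hzero : Tendsto (fun _ : ℝ => (0:ℝ)) atTop (nhds 0) := tendsto_const_nhds
    refine tendsto_of_tendsto_of_tendsto_of_le_of_le' hzero hhlim ?_ ?_
    · filter_upwards [eventually_ge_atTop (1:ℝ)] with u hu
      have hu0 : 0 < u := lt_of_lt_of_le one_pos hu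
      apply div_nonneg _ (sq_nonneg _)
      have : 0 < a * u + 2 := by nlinarith
      positivity
    · filter_upwards [eventually_ge_atTop (1:ℝ)] with u hu
      have hu0 : 0 < u := lt_of_lt_of_le one_pos hu
      have he : 0 < Real.exp (a * u) := Real.exp_pos _
      have hD : lam * u ^ 2 * Real.exp (a * u) ≤ 1 + lam * u ^ 2 * Real.exp (a * u) := by
        linarith
      have hDpos : 0 < lam * u ^ 2 * Real.exp (a * u) := by positivity
      have hnum : 0 ≤ u * (a * u + 2) * Real.exp (a * u) := by
        have : 0 < a * u + 2 := by nlinarith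
        positivity
      have step : waveLossDeriv a lam u ≤
          u * (a * u + 2) * Real.exp (a * u) / (lam * u ^ 2 * Real.exp (a * u)) ^ 2 := by
        apply div_le_div_of_nonneg_left hnum (by positivity)
        exact pow_le_pow_left₀ hDpos.le hD 2
      refine step.trans (le_of_eq ?_)
      rw [hh]
      simp only [Real.exp_neg]
      field_simp
  -- Limit at -∞
  have hbot : Tendsto (waveLossDeriv a lam) atBot (nhds 0) := by
    have hnum : Tendsto (fun u : ℝ => u * (a * u + 2) * Real.exp (a * u)) atBot (nhds 0) := by
      have h2 := (pow_mul_exp_tendsto_atBot a ha 2).const_mul a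
      have h1 := (pow_mul_exp_tendsto_atBot a ha 1).const_mul 2
      rw [mul_zero] at h2 h1
      have := h2.add h1
      rw [add_zero] at this
      refine this.congr fun u => ?_
      ring
    have habs : Tendsto (fun u => |waveLossDeriv a lam u|) atBot (nhds 0) := by
      have hzero : Tendsto (fun _ : ℝ => (0:ℝ)) atBot (nhds 0) := tendsto_const_nhds
      have hnumabs : Tendsto (fun u : ℝ => |u * (a * u + 2) * Real.exp (a * u)|) atBot (nhds 0) := by
        have := hnum.abs; simpa using this
      refine tendsto_of_tendsto_of_tendsto_of_le_of_le' hzero hnumabs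
        (Eventually.of_forall fun u => abs_nonneg _) (Eventually.of_forall fun u => ?_)
      unfold waveLossDeriv
      rw [abs_div]
      have hx : 0 ≤ lam * u ^ 2 * Real.exp (a * u) :=
        mul_nonneg (mul_nonneg hlam.le (sq_nonneg u)) (Real.exp_pos _).le
      have hd1 : (1:ℝ) ≤ |(1 + lam * u ^ 2 * Real.exp (a * u)) ^ 2| := by
        rw [abs_of_pos (by positivity)]
        nlinarith [sq_nonneg (lam * u ^ 2 * Real.exp (a * u))]
      exact div_le_self (abs_nonneg _) hd1
    rw [show nhds (0:ℝ) = nhds |0| by simp] at habs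
    exact tendsto_zero_iff_abs_tendsto_zero _ |>.mpr (by simpa [Function.comp_def] using habs)
  refine ⟨htop, hbot, ?_⟩
  -- Boundedness
  have hcont : Continuous (waveLossDeriv a lam) := by
    apply Continuous.div
    · fun_prop
    · fun_prop
    · intro u
      exact pow_ne_zero 2 (hden u).ne'
  have hcc : Tendsto (waveLossDeriv a lam) (cocompact ℝ) (nhds 0) := by
    rw [cocompact_eq_atBot_atTop, tendsto_sup]
    exact ⟨hbot, htop⟩
  have hev : ∀ᶠ u in cocompact ℝ, |waveLossDeriv a lam u| ≤ 1 := by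
    have := hcc.eventually (eventually_abs_sub_lt 0 one_pos)
    filter_upwards [this] with u hu
    simpa using hu.le
  obtain ⟨K, hK, hKsub⟩ := (hasBasis_cocompact.eventually_iff).mp hev
  obtain ⟨C, hC⟩ := hK.exists_bound_of_continuousOn hcont.continuousOn
  refine ⟨max C 1, fun u => ?_⟩
  by_cases hu : u ∈ K
  · exact le_trans (by simpa using hC u hu) (le_max_left _ _)
  · exact le_trans (hKsub hu) (le_max_right _ _)
end

section
/- For every a ∈ ℝ, λ > 0 and p ∈ [0, 1], the conditional wave-risk g_p(α) = p·L_{a,λ}(1−α) + (1−p)·L_{a,λ}(1+α) is differentiable at α = 0 with derivative g_p'(0) = (1 − 2p)·(a + 2)·e^{a} / (1 + λ·e^{a})². -/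
noncomputable def condWaveRisk (a lam p α : ℝ) : ℝ :=
  p * waveLoss a lam (1 - α) + (1 - p) * waveLoss a lam (1 + α)

lemma waveLoss_hasDerivAt_one (a lam : ℝ) (hlam : 0 < lam) :
    HasDerivAt (waveLoss a lam) ((a + 2) * Real.exp a / (1 + lam * Real.exp a) ^ 2) 1 := by
  have hpos : (0:ℝ) < 1 + lam * Real.exp a := by positivity
  have he : HasDerivAt (fun u : ℝ => Real.exp (a * u)) (Real.exp (a * 1) * a) 1 := by
    have h1 : HasDerivAt (fun u : ℝ => a * u) a 1 := by
      simpa using (hasDerivAt_id (1:ℝ)).const_mul a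
    exact h1.exp
  have hu : HasDerivAt (fun u : ℝ => u ^ 2) (2 * 1 ^ 1) 1 := by
    simpa using hasDerivAt_pow 2 (1:ℝ)
  have hprod : HasDerivAt (fun u : ℝ => u ^ 2 * Real.exp (a * u))
      (2 * 1 ^ 1 * Real.exp (a * 1) + 1 ^ 2 * (Real.exp (a * 1) * a)) 1 := hu.mul he
  have hf : HasDerivAt (fun u : ℝ => 1 + lam * u ^ 2 * Real.exp (a * u))
      (lam * Real.exp a * (2 + a)) 1 := by
    have := ((hprod.const_mul lam).const_add 1)
    simp only [← mul_assoc] at this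
    refine this.congr_deriv ?_
    simp only [mul_one, one_pow]
    ring
  have hne : (1 : ℝ) + lam * 1 ^ 2 * Real.exp (a * 1) ≠ 0 := by
    simpa using hpos.ne'
  have hinv := hf.inv hne
  have := ((hinv.const_sub 1).const_mul (1 / lam))
  convert this using 1
  · rfl
  · rfl
  · funext u; simp [waveLoss]
  · simp only [mul_one, one_pow]
    field_simp
    ring

theorem condWaveRisk_hasDerivAt_zero (a lam p : ℝ) (hlam : 0 < lam)
    (hp : p ∈ Set.Icc (0 : ℝ) 1) :
    HasDerivAt (condWaveRisk a lam p)
      ((1 - 2 * p) * (a + 2) * Real.exp a / (1 + lam * Real.exp a) ^ 2) 0 := by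
  set W := (a + 2) * Real.exp a / (1 + lam * Real.exp a) ^ 2 with hW
  have hw := waveLoss_hasDerivAt_one a lam hlam
  have h1in : HasDerivAt (fun α : ℝ => 1 - α) (-1) 0 := by
    simpa using (hasDerivAt_id (0:ℝ)).const_sub 1
  have h2in : HasDerivAt (fun α : ℝ => 1 + α) 1 0 := by
    simpa using (hasDerivAt_id (0:ℝ)).const_add 1
  have hw1 : HasDerivAt (waveLoss a lam) W ((1:ℝ) - 0) := by rw [sub_zero]; exact hw
  have hw2 : HasDerivAt (waveLoss a lam) W ((1:ℝ) + 0) := by rw [add_zero]; exact hw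
  have h1 : HasDerivAt (fun α : ℝ => waveLoss a lam (1 - α)) (W * (-1)) 0 := by
    exact hw1.comp 0 h1in
  have h2 : HasDerivAt (fun α : ℝ => waveLoss a lam (1 + α)) (W * 1) 0 := by
    exact hw2.comp 0 h2in
  have := (h1.const_mul p).add (h2.const_mul (1 - p))
  refine this.congr_deriv ?_
  rw [hW]; ring
end

section
/- Let λ > 0 and a > −2. If p ∈ (1/2, 1], then there exists α > 0 with g_p(α) < g_p(0); and if p ∈ [0, 1/2), then there exists α < 0 with g_p(α) < g_p(0). In other words, the zero score is never optimal for the conditional wave-risk when p ≠ 1/2. -/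
lemma wave_hasDerivAt (a lam : ℝ) (hlam : 0 < lam) (u : ℝ) :
    HasDerivAt (waveLoss a lam)
      (Real.exp (a * u) * (2 * u + a * u ^ 2) /
        (1 + lam * u ^ 2 * Real.exp (a * u)) ^ 2) u := by
  have hpos : 0 < 1 + lam * u ^ 2 * Real.exp (a * u) := by
    have : 0 ≤ lam * u ^ 2 * Real.exp (a * u) := by positivity
    linarith
  have hexp : HasDerivAt (fun x : ℝ => Real.exp (a * x)) (Real.exp (a * u) * a) u := by
    have h := (Real.hasDerivAt_exp (a * u)).comp u ((hasDerivAt_id u).const_mul a)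
    exact h.congr_deriv (by ring)
  have hD : HasDerivAt (fun x : ℝ => 1 + lam * x ^ 2 * Real.exp (a * x))
      (lam * (2 * u ^ 1) * Real.exp (a * u) + lam * u ^ 2 * (Real.exp (a * u) * a)) u := by
    have h := ((hasDerivAt_pow 2 u).const_mul lam).mul hexp
    have h2 := (hasDerivAt_const u (1 : ℝ)).add h
    exact h2.congr_deriv (by norm_num)
  have hinv := hD.inv (ne_of_gt hpos)
  have hF := ((hasDerivAt_const u (1 : ℝ)).sub hinv).const_mul (1 / lam)
  have hEq : waveLoss a lam =
      fun v : ℝ => 1 / lam * (1 - (1 + lam * v ^ 2 * Real.exp (a * v))⁻¹) := by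
    funext v; simp [waveLoss, one_div]
  rw [hEq]
  refine hF.congr_deriv ?_
  field_simp
  ring

lemma deriv_neg_exists_gt (f : ℝ → ℝ) (x d : ℝ) (hf : HasDerivAt f d x) (hd : d < 0) :
    ∃ y, x < y ∧ f y < f x := by
  have hs := hasDerivAt_iff_tendsto_slope.mp hf
  have h1 : ∀ᶠ y in nhdsWithin x {x}ᶜ, slope f x y < 0 := hs.eventually_lt_const hd
  have h2 : ∀ᶠ y in nhdsWithin x (Set.Ioi x), slope f x y < 0 :=
    h1.filter_mono (nhdsWithin_mono x (by intro y hy; exact ne_of_gt hy))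
  have h3 : ∀ᶠ y in nhdsWithin x (Set.Ioi x), slope f x y < 0 ∧ x < y :=
    h2.and self_mem_nhdsWithin
  obtain ⟨y, hsl, hxy⟩ := h3.exists
  refine ⟨y, hxy, ?_⟩
  rw [slope_def_field] at hsl
  rcases div_neg_iff.mp hsl with ⟨h, h'⟩ | ⟨h, h'⟩ <;> linarith

lemma deriv_pos_exists_lt (f : ℝ → ℝ) (x d : ℝ) (hf : HasDerivAt f d x) (hd : 0 < d) :
    ∃ y, y < x ∧ f y < f x := by
  have hs := hasDerivAt_iff_tendsto_slope.mp hf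
  have h1 : ∀ᶠ y in nhdsWithin x {x}ᶜ, 0 < slope f x y := hs.eventually_const_lt hd
  have h2 : ∀ᶠ y in nhdsWithin x (Set.Iio x), 0 < slope f x y :=
    h1.filter_mono (nhdsWithin_mono x (by intro y hy; exact ne_of_lt hy))
  have h3 : ∀ᶠ y in nhdsWithin x (Set.Iio x), 0 < slope f x y ∧ y < x :=
    h2.and self_mem_nhdsWithin
  obtain ⟨y, hsl, hxy⟩ := h3.exists
  refine ⟨y, hxy, ?_⟩
  rw [slope_def_field] at hsl
  rcases div_pos_iff.mp hsl with ⟨h, h'⟩ | ⟨h, h'⟩ <;> linarith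

theorem zero_score_not_optimal (a lam p : ℝ) (hlam : 0 < lam) (ha : -2 < a)
    (hp : p ∈ Set.Icc (0 : ℝ) 1) :
    (1 / 2 < p → ∃ α : ℝ, 0 < α ∧ condWaveRisk a lam p α < condWaveRisk a lam p 0) ∧
    (p < 1 / 2 → ∃ α : ℝ, α < 0 ∧ condWaveRisk a lam p α < condWaveRisk a lam p 0) := by
  set C : ℝ := Real.exp a * (2 + a) / (1 + lam * Real.exp a) ^ 2 with hCdef
  have hC : 0 < C := by
    have h1 : 0 < Real.exp a := Real.exp_pos a
    have h2 : 0 < (1 + lam * Real.exp a) ^ 2 := by positivity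
    have h3 : 0 < 2 + a := by linarith
    exact div_pos (mul_pos h1 h3) h2
  have hw := wave_hasDerivAt a lam hlam 1
  have hwC : HasDerivAt (waveLoss a lam) C 1 := by
    convert hw using 2 <;> norm_num
  have hwC1 : HasDerivAt (waveLoss a lam) C ((1 : ℝ) - 0) := by norm_num; exact hwC
  have hwC2 : HasDerivAt (waveLoss a lam) C ((1 : ℝ) + 0) := by norm_num; exact hwC
  have hi1 : HasDerivAt (fun α : ℝ => 1 - α) (-1) 0 := by
    exact ((hasDerivAt_const (0 : ℝ) (1 : ℝ)).sub (hasDerivAt_id (0 : ℝ))).congr_deriv (by norm_num)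
  have hi2 : HasDerivAt (fun α : ℝ => 1 + α) 1 0 := by
    exact ((hasDerivAt_const (0 : ℝ) (1 : ℝ)).add (hasDerivAt_id (0 : ℝ))).congr_deriv (by norm_num)
  have h1 : HasDerivAt (fun α : ℝ => waveLoss a lam (1 - α)) (C * -1) 0 :=
    hwC1.comp (0 : ℝ) hi1
  have h2 : HasDerivAt (fun α : ℝ => waveLoss a lam (1 + α)) (C * 1) 0 :=
    hwC2.comp (0 : ℝ) hi2
  have hg : HasDerivAt (fun α => condWaveRisk a lam p α) ((1 - 2 * p) * C) 0 := by
    have h := (h1.const_mul p).add (h2.const_mul (1 - p))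
    unfold condWaveRisk
    refine h.congr_deriv ?_
    ring
  constructor
  · intro hphalf
    have hd : (1 - 2 * p) * C < 0 := by nlinarith
    obtain ⟨y, hy, hlt⟩ := deriv_neg_exists_gt _ 0 _ hg hd
    exact ⟨y, hy, hlt⟩
  · intro hphalf
    have hd : 0 < (1 - 2 * p) * C := by nlinarith
    obtain ⟨y, hy, hlt⟩ := deriv_pos_exists_lt _ 0 _ hg hd
    exact ⟨y, hy, hlt⟩
end

section
/- Let λ > 0 and a > 0. If p ∈ (1/2, 1], then for every α > 0 one has g_p(α) < g_p(−α); symmetrically, if p ∈ [0, 1/2), then for every α > 0 one has g_p(−α) < g_p(α). That is, scores whose sign agrees with the more probable label have strictly smaller conditional wave-risk than their reflections. -/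
lemma waveLoss_key (a lam : ℝ) (hlam : 0 < lam) (ha : 0 < a) (α : ℝ) (hα : 0 < α) :
    waveLoss a lam (1 - α) < waveLoss a lam (1 + α) := by
  unfold waveLoss
  have e1 := Real.exp_pos (a * (1 - α))
  have e2 := Real.exp_pos (a * (1 + α))
  have hexp : Real.exp (a * (1 - α)) < Real.exp (a * (1 + α)) := by
    apply Real.exp_lt_exp.2; nlinarith
  have h1 : 0 < 1 + lam * (1 - α) ^ 2 * Real.exp (a * (1 - α)) := by positivity
  have h2 : 0 < 1 + lam * (1 + α) ^ 2 * Real.exp (a * (1 + α)) := by positivity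
  have hlt : 1 + lam * (1 - α) ^ 2 * Real.exp (a * (1 - α)) <
      1 + lam * (1 + α) ^ 2 * Real.exp (a * (1 + α)) := by
    have hA : lam * (1 - α) ^ 2 * Real.exp (a * (1 - α)) ≤
        lam * (1 + α) ^ 2 * Real.exp (a * (1 - α)) := by nlinarith [mul_pos hlam e1]
    have hB : lam * (1 + α) ^ 2 * Real.exp (a * (1 - α)) <
        lam * (1 + α) ^ 2 * Real.exp (a * (1 + α)) := by
      have : 0 < lam * (1 + α) ^ 2 := by positivity
      exact mul_lt_mul_of_pos_left hexp this
    linarith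
  have hdiv := one_div_lt_one_div_of_lt h1 hlt
  have hlam' : 0 < 1 / lam := by positivity
  have := mul_lt_mul_of_pos_left (sub_lt_sub_left hdiv 1) hlam'
  linarith

theorem sign_agreement_smaller_risk (a lam p : ℝ) (hlam : 0 < lam) (ha : 0 < a)
    (hp : p ∈ Set.Icc (0 : ℝ) 1) :
    (1 / 2 < p → ∀ α : ℝ, 0 < α → condWaveRisk a lam p α < condWaveRisk a lam p (-α)) ∧
    (p < 1 / 2 → ∀ α : ℝ, 0 < α → condWaveRisk a lam p (-α) < condWaveRisk a lam p α) := by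
  constructor
  · intro hp' α hα
    have hkey := waveLoss_key a lam hlam ha α hα
    unfold condWaveRisk
    rw [show (1:ℝ) - -α = 1 + α by ring, show (1:ℝ) + -α = 1 - α by ring]
    nlinarith
  · intro hp' α hα
    have hkey := waveLoss_key a lam hlam ha α hα
    unfold condWaveRisk
    rw [show (1:ℝ) - -α = 1 + α by ring, show (1:ℝ) + -α = 1 - α by ring]
    nlinarith
end

section
/- (Classification-calibration of the wave loss, infimum form.) Let λ > 0 and a > 0, and let p ∈ [0, 1] with p ≠ 1/2. Then the infimum of the conditional wave-risk g_p(α) over the set of scores whose sign disagrees with the Bayes decision, namely over {α ∈ ℝ : (2p − 1)·α ≤ 0}, is strictly greater than the infimum of g_p(α) over all α ∈ ℝ. -/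
set_option maxHeartbeats 1000000
open Filter Topology

noncomputable def wphi (a u : ℝ) : ℝ := u ^ 2 * Real.exp (a * u)

lemma wphi_nonneg (a u : ℝ) : 0 ≤ wphi a u := by
  unfold wphi; positivity

lemma wdenom_pos (a u : ℝ) {lam : ℝ} (hlam : 0 < lam) : 0 < 1 + lam * wphi a u := by
  nlinarith [wphi_nonneg a u]

lemma waveLoss_eq (a lam u : ℝ) :
    waveLoss a lam u = (1 / lam) * (1 - 1 / (1 + lam * wphi a u)) := by
  unfold waveLoss wphi; ring_nf

lemma waveLoss_sub (a u v : ℝ) {lam : ℝ} (hlam : 0 < lam) :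
    waveLoss a lam u - waveLoss a lam v =
      (wphi a u - wphi a v) / ((1 + lam * wphi a u) * (1 + lam * wphi a v)) := by
  rw [waveLoss_eq, waveLoss_eq]
  have h1 := wdenom_pos a u hlam
  have h2 := wdenom_pos a v hlam
  field_simp
  ring

lemma waveLoss_nonneg (a u : ℝ) {lam : ℝ} (hlam : 0 < lam) : 0 ≤ waveLoss a lam u := by
  have h0 : waveLoss a lam 0 = 0 := by unfold waveLoss; simp
  have hs := waveLoss_sub a u 0 hlam
  rw [h0, sub_zero] at hs
  have h00 : wphi a 0 = 0 := by unfold wphi; simp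
  rw [h00] at hs
  rw [hs]
  have h1 := wdenom_pos a u hlam
  have h2 := wphi_nonneg a u
  apply div_nonneg (by linarith)
  nlinarith

lemma waveLoss_mono (a u v : ℝ) {lam : ℝ} (hlam : 0 < lam) (h : wphi a u ≤ wphi a v) :
    waveLoss a lam u ≤ waveLoss a lam v := by
  have hs := waveLoss_sub a v u hlam
  have h1 := wdenom_pos a u hlam
  have h2 := wdenom_pos a v hlam
  have : 0 ≤ waveLoss a lam v - waveLoss a lam u := by
    rw [hs]; apply div_nonneg (by linarith); positivity
  linarith

lemma waveLoss_strict_mono (a u v : ℝ) {lam : ℝ} (hlam : 0 < lam) (h : wphi a u < wphi a v) :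
    waveLoss a lam u < waveLoss a lam v := by
  have hs := waveLoss_sub a v u hlam
  have h1 := wdenom_pos a u hlam
  have h2 := wdenom_pos a v hlam
  have : 0 < waveLoss a lam v - waveLoss a lam u := by
    rw [hs]; apply div_pos (by linarith); positivity
  linarith

lemma wphi_mono {a u v : ℝ} (ha : 0 < a) (h0 : 0 ≤ u) (h : u ≤ v) : wphi a u ≤ wphi a v := by
  unfold wphi
  have he : Real.exp (a * u) ≤ Real.exp (a * v) := by
    apply Real.exp_le_exp.2; nlinarith
  have h2 : u ^ 2 ≤ v ^ 2 := by nlinarith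
  nlinarith [Real.exp_pos (a * u)]

lemma wphi_strict_mono {a u v : ℝ} (ha : 0 < a) (h0 : 0 ≤ u) (h : u < v) : wphi a u < wphi a v := by
  unfold wphi
  have he : Real.exp (a * u) < Real.exp (a * v) := by
    apply Real.exp_lt_exp.2; nlinarith
  have h2 : u ^ 2 ≤ v ^ 2 := by nlinarith
  have hv : 0 < v ^ 2 := by nlinarith
  nlinarith [Real.exp_pos (a * u)]

lemma wphi_neg_le {a u : ℝ} (ha : 0 < a) (h : u ≤ 0) :
    wphi a u ≤ 4 * Real.exp (-2) / a ^ 2 := by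
  unfold wphi
  have hx0 : (0:ℝ) ≤ -(a*u)/2 := by nlinarith
  set x : ℝ := -(a*u)/2 with hx
  have key : x * Real.exp (-x) ≤ Real.exp (-1) := by
    have h1 := Real.add_one_le_exp (x - 1)
    have h2 : Real.exp (x-1) * Real.exp (-x) = Real.exp (-1) := by
      rw [← Real.exp_add]; ring_nf
    nlinarith [Real.exp_pos (-x)]
  have hexp : Real.exp (a * u) = Real.exp (-x) * Real.exp (-x) := by
    rw [← Real.exp_add]; congr 1; rw [hx]; ring
  have hu2 : u ^ 2 = 4 * x^2 / a^2 := by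
    rw [hx]; field_simp; ring
  have he2 : Real.exp (-2) = Real.exp (-1) * Real.exp (-1) := by
    rw [← Real.exp_add]; norm_num
  rw [hexp, hu2, he2]
  have hex : (0:ℝ) ≤ Real.exp (-x) := (Real.exp_pos _).le
  calc 4*x^2/a^2 * (Real.exp (-x)*Real.exp (-x)) = 4*(x*Real.exp (-x))^2/a^2 := by ring
    _ ≤ 4*(Real.exp (-1))^2/a^2 := by gcongr <;> positivity
    _ = 4*(Real.exp (-1)*Real.exp (-1))/a^2 := by ring

lemma wphi_hasDerivAt (a u : ℝ) :
    HasDerivAt (fun u => wphi a u) ((2*u + a*u^2) * Real.exp (a*u)) u := by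
  have h1 : HasDerivAt (fun u : ℝ => u^2) (2*u) u := by
    simpa using hasDerivAt_pow 2 u
  have h2 : HasDerivAt (fun u : ℝ => Real.exp (a*u)) (Real.exp (a*u) * a) u := by
    simpa using ((hasDerivAt_id u).const_mul a).exp
  have := h1.mul h2
  unfold wphi
  exact this.congr_deriv (by ring)

lemma waveLoss_hasDerivAt (a u : ℝ) {lam : ℝ} (hlam : 0 < lam) :
    HasDerivAt (waveLoss a lam)
      ((2*u + a*u^2) * Real.exp (a*u) / (1 + lam * wphi a u)^2) u := by
  have hd : HasDerivAt (fun u => 1 + lam * wphi a u) (lam * ((2*u + a*u^2) * Real.exp (a*u))) u :=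
    ((wphi_hasDerivAt a u).const_mul lam).const_add 1
  have hne : (1 + lam * wphi a u) ≠ 0 := (wdenom_pos a u hlam).ne'
  have hinv := hd.inv hne
  have h2 : HasDerivAt (fun u => (1/lam) * (1 - (1 + lam * wphi a u)⁻¹))
      ((1/lam) * (0 - (-(lam * ((2*u + a*u^2) * Real.exp (a*u))) / (1 + lam * wphi a u) ^ 2))) u :=
    ((hasDerivAt_const u (1:ℝ)).sub hinv).const_mul (1/lam)
  have heq : waveLoss a lam = fun u => (1/lam) * (1 - (1 + lam * wphi a u)⁻¹) := by
    funext v; unfold waveLoss wphi; rw [mul_assoc, one_div (1 + lam * (v ^ 2 * Real.exp (a * v)))]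
  rw [heq]
  convert h2 using 1
  field_simp
  ring

lemma condWaveRisk_hasDerivAt (a lam p : ℝ) (hlam : 0 < lam) :
    HasDerivAt (condWaveRisk a lam p)
      ((1 - 2*p) * ((2 + a) * Real.exp a / (1 + lam * wphi a 1)^2)) 0 := by
  have hm : HasDerivAt (fun α : ℝ => 1 - α) (-1) 0 := by
    simpa using (hasDerivAt_id (0:ℝ)).const_sub 1
  have hp2 : HasDerivAt (fun α : ℝ => 1 + α) (1:ℝ) 0 := by
    simpa using (hasDerivAt_id (0:ℝ)).const_add 1
  have h1 := (waveLoss_hasDerivAt a (1-(0:ℝ)) hlam).comp 0 hm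
  have h2 := (waveLoss_hasDerivAt a (1+(0:ℝ)) hlam).comp 0 hp2
  have hsum := (h1.const_mul p).add (h2.const_mul (1-p))
  have heq : condWaveRisk a lam p = fun α => p * ((waveLoss a lam ∘ fun α => 1-α) α)
      + (1-p) * ((waveLoss a lam ∘ fun α => 1+α) α) := rfl
  rw [heq]
  exact hsum.congr_deriv (by simp only [sub_zero, add_zero, mul_one]; ring)

lemma exists_right_lt {f : ℝ → ℝ} {x c : ℝ} (hf : HasDerivAt f c x) (hc : c < 0) :
    ∃ y, x < y ∧ f y < f x := by
  have h := hasDerivAt_iff_tendsto_slope.1 hf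
  have hmono : 𝓝[>] x ≤ 𝓝[≠] x :=
    nhdsWithin_mono x (fun y hy => ne_of_gt hy)
  have h2 : ∀ᶠ y in 𝓝[>] x, slope f x y < 0 :=
    (h.mono_left hmono).eventually_lt_const hc
  obtain ⟨y, hsl, hy⟩ := (h2.and self_mem_nhdsWithin).exists
  refine ⟨y, hy, ?_⟩
  rw [slope_def_field] at hsl
  have hxy : 0 < y - x := sub_pos.2 hy
  have h3 : f y - f x = (f y - f x) / (y - x) * (y - x) :=
    (div_mul_cancel₀ _ (ne_of_gt hxy)).symm
  nlinarith

lemma wphi_le_neg {a u : ℝ} (ha : 0 < a) (h : u ≤ 0) : wphi a u ≤ wphi a (-u) := by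
  unfold wphi
  have he : Real.exp (a*u) ≤ Real.exp (a * -u) := Real.exp_le_exp.2 (by nlinarith)
  nlinarith [sq_nonneg u, Real.exp_pos (a*u)]

lemma condWaveRisk_continuous (a lam p : ℝ) (hlam : 0 < lam) :
    Continuous (condWaveRisk a lam p) := by
  have hL : Continuous (waveLoss a lam) := by
    rw [continuous_iff_continuousAt]
    exact fun u => (waveLoss_hasDerivAt a u hlam).differentiableAt.continuousAt
  unfold condWaveRisk
  fun_prop

lemma calib_main (a lam p : ℝ) (hlam : 0 < lam) (ha : 0 < a) (hp : 1/2 < p) (hp1 : p ≤ 1) :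
    sInf (Set.range (condWaveRisk a lam p)) <
      sInf (condWaveRisk a lam p '' {α : ℝ | α ≤ 0}) := by
  set g := condWaveRisk a lam p with hgdef
  clear_value g
  have hg_nonneg : ∀ α, 0 ≤ g α := by
    intro α
    have h1 := waveLoss_nonneg a (1-α) hlam
    have h2 := waveLoss_nonneg a (1+α) hlam
    have he : g α = p * waveLoss a lam (1 - α) + (1 - p) * waveLoss a lam (1 + α) := by
      rw [hgdef]; rfl
    nlinarith
  have hbdd : BddBelow (Set.range g) := ⟨0, by rintro y ⟨α, rfl⟩; exact hg_nonneg α⟩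
  have hIle : ∀ α, sInf (Set.range g) ≤ g α := fun α => csInf_le hbdd ⟨α, rfl⟩
  set I := sInf (Set.range g) with hIdef
  clear_value I
  -- point with smaller value than g 0
  have hcneg : (1 - 2*p) * ((2 + a) * Real.exp a / (1 + lam * wphi a 1)^2) < 0 := by
    apply mul_neg_of_neg_of_pos (by linarith)
    exact div_pos (mul_pos (by linarith) (Real.exp_pos a)) (pow_pos (wdenom_pos a 1 hlam) 2)
  obtain ⟨α₀, hα₀pos, hα₀⟩ := exists_right_lt (condWaveRisk_hasDerivAt a lam p hlam) hcneg
  rw [← hgdef] at hα₀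
  have hI0 : I < g 0 := lt_of_le_of_lt (hIle α₀) hα₀
  -- reflection identity
  have hrefl : ∀ α, g α = g (-α)
      + (2*p - 1) * (waveLoss a lam (1-α) - waveLoss a lam (1+α)) := by
    intro α
    rw [hgdef]
    unfold condWaveRisk
    rw [sub_neg_eq_add, ← sub_eq_add_neg]
    ring
  have hstrict : ∀ α < 0, waveLoss a lam (1+α) < waveLoss a lam (1-α) := by
    intro α hα
    apply waveLoss_strict_mono a _ _ hlam
    by_cases hc : 0 ≤ 1 + α
    · exact wphi_strict_mono ha hc (by linarith)
    · push_neg at hc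
      calc wphi a (1+α) ≤ wphi a (-(1+α)) := wphi_le_neg ha (by linarith)
        _ < wphi a (1-α) := wphi_strict_mono ha (by linarith) (by linarith)
  -- compact part
  have h2a : 0 < 2/a := by positivity
  set T : ℝ := 1 + 2/a with hTdef
  clear_value T
  have hT0 : 0 < T := by rw [hTdef]; linarith
  obtain ⟨β, hβmem, hβmin⟩ := (isCompact_Icc (a := -T) (b := 0)).exists_isMinOn
    ⟨0, Set.mem_Icc.2 ⟨by linarith, le_rfl⟩⟩ (condWaveRisk_continuous a lam p hlam).continuousOn
  rw [← hgdef] at hβmin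
  have hmI : I < g β := by
    rcases lt_or_eq_of_le hβmem.2 with hβ | hβ
    · have h1 : g (-β) < g β := by
        have hs := hstrict β hβ
        nlinarith [hrefl β]
      exact lt_of_le_of_lt (hIle (-β)) h1
    · rw [hβ]; exact hI0
  -- outer part
  set B : ℝ := 4 * Real.exp (-2) / a^2 with hBdef
  set Q : ℝ := 2 + 2/a with hQdef
  set P : ℝ := wphi a Q with hPdef
  clear_value B Q P
  have hB0 : 0 ≤ B := by rw [hBdef]; positivity
  have hQpos : 0 < Q := by rw [hQdef]; positivity
  have hB0'  : 0 ≤ B := by positivity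
  have hBP : B < P := by
    have he1 : Real.exp (-2) < 1 := Real.exp_lt_one_iff.2 (by norm_num)
    have hone : (1:ℝ) ≤ Real.exp (a*Q) := Real.one_le_exp (by positivity)
    have h1 : B < 4/a^2 := by
      rw [hBdef, div_lt_div_iff₀ (by positivity) (by positivity)]
      nlinarith [mul_pos (by linarith : (0:ℝ) < 1 - Real.exp (-2)) (mul_pos ha ha)]
    have h2 : (4:ℝ)/a^2 < Q^2 := by
      rw [hQdef, div_lt_iff₀ (by positivity : (0:ℝ) < a^2)]
      have hexp : (2+2/a)^2*a^2 = (2*a+2)^2 := by field_simp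
      rw [hexp]
      nlinarith [mul_pos ha ha]
    have h3 : Q^2 ≤ P := by
      rw [hPdef]
      unfold wphi
      nlinarith
    linarith
  have hP0 : 0 ≤ P := by rw [hPdef]; exact wphi_nonneg a Q
  have hdB : 0 < 1 + lam * B := by nlinarith
  have hdP : 0 < 1 + lam * P := by nlinarith
  set δ : ℝ := (P - B) / ((1 + lam*P) * (1 + lam*B)) with hδdef
  clear_value δ
  have hδpos : 0 < δ := by rw [hδdef]; exact div_pos (by linarith) (mul_pos hdP hdB)
  have houter : ∀ α ≤ -T, I + (2*p-1)*δ ≤ g α := by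
    intro α hα
    have hQ0 : (0:ℝ) ≤ Q := by positivity
    have hαQ : Q ≤ 1 - α := by rw [hQdef]; rw [hTdef] at hα; linarith
    have hmono1 : waveLoss a lam Q ≤ waveLoss a lam (1-α) :=
      waveLoss_mono a _ _ hlam (wphi_mono ha hQ0 hαQ)
    have hneg : 1 + α ≤ 0 := by rw [hTdef] at hα; linarith
    have hphile : wphi a (1+α) ≤ B := by rw [hBdef]; exact wphi_neg_le ha hneg
    have hφ0 := wphi_nonneg a (1+α)
    have hdφ : 0 < 1 + lam * wphi a (1+α) := wdenom_pos a (1+α) hlam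
    have hsub := waveLoss_sub a Q (1+α) hlam
    have hδle : δ ≤ waveLoss a lam Q - waveLoss a lam (1+α) := by
      rw [hsub, hδdef, ← hPdef]
      have hd1 : 1 + lam * wphi a (1+α) ≤ 1 + lam * B := by nlinarith
      exact div_le_div₀ (by linarith) (by linarith)
        (mul_pos hdP hdφ) (mul_le_mul_of_nonneg_left hd1 hdP.le)
    have hgR : I ≤ g (-α) := hIle _
    have hdiff : δ ≤ waveLoss a lam (1-α) - waveLoss a lam (1+α) := by linarith
    have hm3 := mul_le_mul_of_nonneg_left hdiff (by linarith : (0:ℝ) ≤ 2*p-1)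
    linarith [hrefl α]
  -- conclude
  have hne : (g '' {α : ℝ | α ≤ 0}).Nonempty := ⟨g 0, 0, by norm_num, rfl⟩
  have hcI : I < min (g β) (I + (2*p-1)*δ) := lt_min hmI (by nlinarith)
  refine lt_of_lt_of_le hcI (le_csInf hne ?_)
  rintro y ⟨α, hα, rfl⟩
  rcases le_or_gt α (-T) with h | h
  · exact le_trans (min_le_right _ _) (houter α h)
  · exact le_trans (min_le_left _ _) (hβmin ⟨h.le, hα⟩)

theorem wave_loss_classification_calibrated_inf (a lam p : ℝ) (hlam : 0 < lam)
    (ha : 0 < a) (hp : p ∈ Set.Icc (0 : ℝ) 1) (hp' : p ≠ 1 / 2) :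
    sInf (Set.range (condWaveRisk a lam p)) <
      sInf (condWaveRisk a lam p '' {α : ℝ | (2 * p - 1) * α ≤ 0}) := by
  obtain ⟨hp0, hp1⟩ := hp
  rcases lt_or_gt_of_ne hp' with hlt | hgt
  · have hq : 1/2 < 1 - p := by linarith
    have hq1 : 1 - p ≤ 1 := by linarith
    have hsym : ∀ α, condWaveRisk a lam p α = condWaveRisk a lam (1-p) (-α) := by
      intro α; unfold condWaveRisk; rw [sub_neg_eq_add, ← sub_eq_add_neg]; ring
    have hrange : Set.range (condWaveRisk a lam p) = Set.range (condWaveRisk a lam (1-p)) := by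
      ext y; constructor
      · rintro ⟨α, rfl⟩; exact ⟨-α, (hsym α).symm⟩
      · rintro ⟨α, rfl⟩; exact ⟨-α, by rw [hsym (-α), neg_neg]⟩
    have hset : condWaveRisk a lam p '' {α : ℝ | (2 * p - 1) * α ≤ 0}
        = condWaveRisk a lam (1-p) '' {α : ℝ | α ≤ 0} := by
      ext y; constructor
      · rintro ⟨α, hα, rfl⟩
        refine ⟨-α, ?_, (hsym α).symm⟩
        simp only [Set.mem_setOf_eq] at hα ⊢
        nlinarith
      · rintro ⟨α, hα, rfl⟩
        refine ⟨-α, ?_, by rw [hsym (-α), neg_neg]⟩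
        simp only [Set.mem_setOf_eq] at hα ⊢
        nlinarith
    rw [hrange, hset]
    exact calib_main a lam (1-p) hlam ha hq hq1
  · have hset : {α : ℝ | (2 * p - 1) * α ≤ 0} = {α : ℝ | α ≤ 0} := by
      ext α; simp only [Set.mem_setOf_eq]
      constructor
      · intro h; nlinarith
      · intro h; nlinarith
    rw [hset]
    exact calib_main a lam p hlam ha hgt hp1
end
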